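/- Saturation for pure states: For any pure state ψ_ABCD on H_A ⊗ H_B ⊗ H_C ⊗ H_D, T_sq(A;C|B)_ψ = co(QCMI)[ψ_ABCD] = (1/2)·I(A;C|B)_ψ. -/

import Mathlib

open scoped ComplexOrder

/-- A density operator (quantum state): positive semidefinite with unit trace. -/
def IsDensity {d : Type*} [Fintype d] (ρ : Matrix d d ℂ) : Prop :=
  ρ.PosSemidef ∧ ρ.trace = 1

/-- Von Neumann entropy `S(ρ) = −tr(ρ log₂ ρ)`, computed via eigenvalues
(with the convention `0 · log₂ 0 = 0`); junk value `0` on non-Hermitian input. -/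
noncomputable def vnEntropy {d : Type*} [Fintype d] [DecidableEq d]
    (ρ : Matrix d d ℂ) : ℝ := by
  classical exact
    if h : ρ.IsHermitian then -∑ i, (h.eigenvalues i) * Real.logb 2 (h.eigenvalues i) else 0

/-- Quantum conditional mutual information `I(x;z|y)_ρ = S(xy) + S(yz) − S(y) − S(xyz)`
for a state on `x ⊗ y ⊗ z` (conditioning on the middle system `y`). -/
noncomputable def qcmi {x y z : Type*} [Fintype x] [Fintype y] [Fintype z]
    [DecidableEq x] [DecidableEq y] [DecidableEq z]
    (ρ : Matrix (x × y × z) (x × y × z) ℂ) : ℝ :=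
  vnEntropy (Matrix.of fun (p q : x × y) => ∑ c, ρ (p.1, p.2, c) (q.1, q.2, c))
  + vnEntropy (Matrix.of fun (p q : y × z) => ∑ a, ρ (a, p.1, p.2) (a, q.1, q.2))
  - vnEntropy (Matrix.of fun (b b' : y) => ∑ a, ∑ c, ρ (a, b, c) (a, b', c))
  - vnEntropy ρ

/-- For a state `σ` on `A ⊗ B ⊗ C ⊗ D ⊗ E`, the conditional mutual information
`I(A;C|BE)_σ`: the spectator `D` is traced out and `BE` is the conditioning system. -/
noncomputable def qcmiACgivenBE {dA dB dC dD dE : Type*}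
    [Fintype dA] [Fintype dB] [Fintype dC] [Fintype dD] [Fintype dE]
    [DecidableEq dA] [DecidableEq dB] [DecidableEq dC] [DecidableEq dE]
    (σ : Matrix ((dA × dB × dC × dD) × dE) ((dA × dB × dC × dD) × dE) ℂ) : ℝ :=
  qcmi (Matrix.of fun (p q : dA × (dB × dE) × dC) =>
    ∑ d : dD, σ ((p.1, p.2.1.1, p.2.2, d), p.2.1.2) ((q.1, q.2.1.1, q.2.2, d), q.2.1.2))

/-- Hysteretic squashed entanglement `T_sq(A;C|B)_ρ` of a state on `A ⊗ B ⊗ C ⊗ D`: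
half the infimum of `I(A;C|BE)_σ` over all state extensions `σ_ABCDE` of `ρ_ABCD`,
over all finite-dimensional extension systems `E`. -/
noncomputable def Tsq {dA dB dC dD : Type*}
    [Fintype dA] [Fintype dB] [Fintype dC] [Fintype dD]
    [DecidableEq dA] [DecidableEq dB] [DecidableEq dC] [DecidableEq dD]
    (ρ : Matrix (dA × dB × dC × dD) (dA × dB × dC × dD) ℂ) : ℝ :=
  sInf { t : ℝ | ∃ (nE : ℕ)
    (σ : Matrix ((dA × dB × dC × dD) × Fin nE) ((dA × dB × dC × dD) × Fin nE) ℂ),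
    IsDensity σ ∧ (Matrix.of fun p q => ∑ e, σ (p, e) (q, e)) = ρ ∧
    t = (1/2) * qcmiACgivenBE σ }

/-- For a state `σ` on `A ⊗ B ⊗ C ⊗ E`, the conditional mutual information
`I(A;C|BE)_σ` with conditioning system `BE`. -/
noncomputable def qcmi3 {dA dB dC dE : Type*}
    [Fintype dA] [Fintype dB] [Fintype dC] [Fintype dE]
    [DecidableEq dA] [DecidableEq dB] [DecidableEq dC] [DecidableEq dE]
    (σ : Matrix ((dA × dB × dC) × dE) ((dA × dB × dC) × dE) ℂ) : ℝ :=
  qcmi (Matrix.of fun (p q : dA × (dB × dE) × dC) =>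
    σ ((p.1, p.2.1.1, p.2.2), p.2.1.2) ((q.1, q.2.1.1, q.2.2), q.2.1.2))

/-- Squashed quantum non-Markovianity `N_sq(A;C|B)_ρ` of a state on `A ⊗ B ⊗ C`:
half the infimum of `I(A;C|BE)_σ` over all state extensions `σ_ABCE` of `ρ_ABC`. -/
noncomputable def Nsq {dA dB dC : Type*}
    [Fintype dA] [Fintype dB] [Fintype dC]
    [DecidableEq dA] [DecidableEq dB] [DecidableEq dC]
    (ρ : Matrix (dA × dB × dC) (dA × dB × dC) ℂ) : ℝ :=
  sInf { t : ℝ | ∃ (nE : ℕ)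
    (σ : Matrix ((dA × dB × dC) × Fin nE) ((dA × dB × dC) × Fin nE) ℂ),
    IsDensity σ ∧ (Matrix.of fun p q => ∑ e, σ (p, e) (q, e)) = ρ ∧
    t = (1/2) * qcmi3 σ }

/-- Choi matrix of a linear map on matrices. -/
noncomputable def choiMatrix {dX dY : Type*} [Fintype dX] [DecidableEq dX] [Fintype dY]
    (Φ : Matrix dX dX ℂ →ₗ[ℂ] Matrix dY dY ℂ) : Matrix (dX × dY) (dX × dY) ℂ :=
  Matrix.of fun p q => Φ (Matrix.single p.1 q.1 1) p.2 q.2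

/-- A quantum channel: completely positive (equivalently, PSD Choi matrix, by Choi's
theorem) and trace-preserving linear map. -/
def IsQuantumChannel {dX dY : Type*} [Fintype dX] [DecidableEq dX] [Fintype dY]
    (Φ : Matrix dX dX ℂ →ₗ[ℂ] Matrix dY dY ℂ) : Prop :=
  (choiMatrix Φ).PosSemidef ∧ ∀ ρ : Matrix dX dX ℂ, (Φ ρ).trace = ρ.trace

/-- `(Φ ⊗ id)` applied to an operator on `X ⊗ R`. -/
noncomputable def applyLeft {dX dY dR : Type*} [Fintype dX] [DecidableEq dX]
    (Φ : Matrix dX dX ℂ →ₗ[ℂ] Matrix dY dY ℂ)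
    (ρ : Matrix (dX × dR) (dX × dR) ℂ) : Matrix (dY × dR) (dY × dR) ℂ :=
  Matrix.of fun p q => ∑ a, ∑ a',
    Φ (Matrix.single a a' 1) p.1 q.1 * ρ (a, p.2) (a', q.2)

/-- `(id ⊗ Φ)` applied to an operator on `R ⊗ X`. -/
noncomputable def applyRight {dX dY dR : Type*} [Fintype dX] [DecidableEq dX]
    (Φ : Matrix dX dX ℂ →ₗ[ℂ] Matrix dY dY ℂ)
    (ρ : Matrix (dR × dX) (dR × dX) ℂ) : Matrix (dR × dY) (dR × dY) ℂ :=
  Matrix.of fun p q => ∑ x, ∑ x',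
    Φ (Matrix.single x x' 1) p.2 q.2 * ρ (p.1, x) (q.1, x')

/-- The positive semidefinite square root of a positive semidefinite matrix
(the definition Mathlib had under this name in December 2024). -/
noncomputable def Matrix.PosSemidef.sqrt {n 𝕜 : Type*} [Fintype n] [DecidableEq n] [RCLike 𝕜]
    {A : Matrix n n 𝕜} (hA : A.PosSemidef) : Matrix n n 𝕜 :=
  (hA.1.eigenvectorUnitary : Matrix n n 𝕜) *
    Matrix.diagonal (fun i => ((Real.sqrt (hA.1.eigenvalues i) : ℝ) : 𝕜)) *
    (star hA.1.eigenvectorUnitary : Matrix n n 𝕜)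

/-- Trace norm `‖X‖₁ = tr √(XᴴX)`. -/
noncomputable def traceNorm {d : Type*} [Fintype d] [DecidableEq d]
    (X : Matrix d d ℂ) : ℝ :=
  ((Matrix.posSemidef_conjTranspose_mul_self X).sqrt.trace).re

/-- Fidelity `F(ρ,σ) = (tr|√ρ √σ|)²` (junk value `0` off the PSD cone). -/
noncomputable def fidelity {d : Type*} [Fintype d] [DecidableEq d]
    (ρ σ : Matrix d d ℂ) : ℝ := by
  classical exact
    if h : ρ.PosSemidef ∧ σ.PosSemidef then (traceNorm (h.1.sqrt * h.2.sqrt)) ^ 2 else 0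

/-- Binary entropy (base 2), with `h₂(0) = h₂(1) = 0`. -/
noncomputable def binEnt (p : ℝ) : ℝ :=
  -(p * Real.logb 2 p) - (1 - p) * Real.logb 2 (1 - p)

/-- ABC-marginal of the pure state `|v⟩⟨v|` on `A ⊗ B ⊗ C ⊗ D`. -/
noncomputable def pureMargABC {dA dB dC dD : Type*}
    [Fintype dA] [Fintype dB] [Fintype dC] [Fintype dD]
    (v : (dA × dB × dC × dD) → ℂ) : Matrix (dA × dB × dC) (dA × dB × dC) ℂ :=
  Matrix.of fun p q =>
    ∑ d, v (p.1, p.2.1, p.2.2, d) * (starRingEnd ℂ) (v (q.1, q.2.1, q.2.2, d))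

/-- Convex-roof extension of QCMI: `co(QCMI)[ρ_ABCD]` is half the infimum of
`Σ_i p_i I(A;C|B)_{ψ^i}` over finite pure-state ensembles `{p_i, ψ^i}` for `ρ`. -/
noncomputable def coQCMI {dA dB dC dD : Type*}
    [Fintype dA] [Fintype dB] [Fintype dC] [Fintype dD]
    [DecidableEq dA] [DecidableEq dB] [DecidableEq dC] [DecidableEq dD]
    (ρ : Matrix (dA × dB × dC × dD) (dA × dB × dC × dD) ℂ) : ℝ :=
  sInf { t : ℝ | ∃ (k : ℕ) (p : Fin k → ℝ) (v : Fin k → (dA × dB × dC × dD) → ℂ),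
    (∀ i, 0 ≤ p i) ∧ (∑ i, p i) = 1 ∧
    (∀ i, ∑ a, v i a * (starRingEnd ℂ) (v i a) = 1) ∧
    ρ = ∑ i, (p i : ℂ) • Matrix.of (fun a b => v i a * (starRingEnd ℂ) (v i b)) ∧
    t = (1/2) * ∑ i, p i * qcmi (pureMargABC (v i)) }


section MyToolkit
open scoped Matrix


open Polynomial in
lemma my_charpoly_diagonal {n : Type*} [Fintype n] [DecidableEq n] (d : n → ℂ) :
    (Matrix.diagonal d).charpoly = ∏ i, (X - C (d i)) := by
  have h : Matrix.charmatrix (Matrix.diagonal d)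
      = Matrix.diagonal (fun i => (X : ℂ[X]) - C (d i)) := by
    ext i j
    by_cases h : i = j
    · subst h; simp [Matrix.charmatrix_apply_eq]
    · simp [Matrix.charmatrix_apply_ne _ _ _ h, Matrix.diagonal_apply_ne _ h]
  rw [Matrix.charpoly, h, Matrix.det_diagonal]

open Polynomial in
lemma my_charmatrix_eq {n : Type*} [Fintype n] [DecidableEq n] (M : Matrix n n ℂ) :
    Matrix.charmatrix M = (X : ℂ[X]) • (1 : Matrix n n ℂ[X]) - M.map C := by
  ext i j
  by_cases h : i = j
  · subst h; simp [Matrix.charmatrix_apply_eq, Matrix.one_apply, Matrix.map_apply]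
  · simp [Matrix.charmatrix_apply_ne _ _ _ h, Matrix.one_apply_ne h, Matrix.map_apply]

open Polynomial in
lemma my_charpoly_conj {n : Type*} [Fintype n] [DecidableEq n] (U M : Matrix n n ℂ)
    (h1 : U * star U = 1) (h2 : star U * U = 1) :
    (U * M * star U).charpoly = M.charpoly := by
  have hmap1 : (U.map (C : ℂ →+* ℂ[X])) * ((star U).map C) = 1 := by
    rw [← Matrix.map_mul, h1]
    exact Matrix.map_one _ (map_zero _) (map_one _)
  have key : Matrix.charmatrix (U * M * star U)
      = (U.map (C : ℂ →+* ℂ[X])) * Matrix.charmatrix M * ((star U).map C) := by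
    rw [my_charmatrix_eq, my_charmatrix_eq]
    rw [Matrix.mul_sub, Matrix.sub_mul]
    congr 1
    · rw [Matrix.mul_smul, Matrix.mul_one, Matrix.smul_mul, hmap1]
    · rw [Matrix.map_mul, Matrix.map_mul]
  rw [Matrix.charpoly, Matrix.charpoly, key, Matrix.det_mul, Matrix.det_mul]
  have hmap2 : ((star U).map (C : ℂ →+* ℂ[X])) * (U.map C) = 1 := by
    rw [← Matrix.map_mul, h2]
    exact Matrix.map_one _ (map_zero _) (map_one _)
  rw [mul_comm, ← mul_assoc, ← Matrix.det_mul, hmap2]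
  simp
open Polynomial in
lemma my_herm_charpoly {n : Type*} [Fintype n] [DecidableEq n] {A : Matrix n n ℂ} (hA : A.IsHermitian) :
    A.charpoly = ∏ i, (X - C ((hA.eigenvalues i : ℝ) : ℂ)) := by
  have hU1 : (hA.eigenvectorUnitary : Matrix n n ℂ) * star (hA.eigenvectorUnitary : Matrix n n ℂ) = 1 :=
    Matrix.mem_unitaryGroup_iff.mp (hA.eigenvectorUnitary).2
  have hU2 : star (hA.eigenvectorUnitary : Matrix n n ℂ) * (hA.eigenvectorUnitary : Matrix n n ℂ) = 1 :=
    Matrix.mem_unitaryGroup_iff'.mp (hA.eigenvectorUnitary).2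
  conv_lhs => rw [hA.spectral_theorem, Unitary.conjStarAlgAut_apply]
  rw [my_charpoly_conj _ _ hU1 hU2, my_charpoly_diagonal]
  rfl

open Polynomial in
lemma my_roots_prod {m : Type*} [Fintype m] (f : m → ℝ) :
    (∏ j, (X - C ((f j : ℝ) : ℂ))).roots = Finset.univ.val.map (fun j => ((f j : ℝ) : ℂ)) := by
  rw [Finset.prod_eq_multiset_prod]
  have := Polynomial.roots_multiset_prod_X_sub_C ((Finset.univ.val.map f).map Complex.ofReal)
  rw [Multiset.map_map, Multiset.map_map] at this
  simpa [Function.comp] using this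

open Polynomial in
lemma my_sum_eig {n m : Type*} [Fintype n] [DecidableEq n] [Fintype m]
    {A : Matrix n n ℂ} (hA : A.IsHermitian) (f : m → ℝ)
    (h : A.charpoly = ∏ j, (X - C ((f j : ℝ) : ℂ))) (g : ℝ → ℝ) :
    ∑ i, g (hA.eigenvalues i) = ∑ j, g (f j) := by
  have h1 : A.charpoly.roots = (Finset.univ.val.map hA.eigenvalues).map Complex.ofReal := by
    rw [my_herm_charpoly hA, Finset.prod_eq_multiset_prod, Multiset.map_map]
    have := Polynomial.roots_multiset_prod_X_sub_C
      ((Finset.univ.val.map hA.eigenvalues).map Complex.ofReal)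
    rw [Multiset.map_map, Multiset.map_map] at this
    simpa [Function.comp] using this
  have h2 : A.charpoly.roots = (Finset.univ.val.map f).map Complex.ofReal := by
    rw [h, Finset.prod_eq_multiset_prod, Multiset.map_map]
    have := Polynomial.roots_multiset_prod_X_sub_C
      ((Finset.univ.val.map f).map Complex.ofReal)
    rw [Multiset.map_map, Multiset.map_map] at this
    simpa [Function.comp] using this
  have h3 : Finset.univ.val.map hA.eigenvalues = Finset.univ.val.map f :=
    Multiset.map_injective Complex.ofReal_injective (h1 ▸ h2)
  rw [Finset.sum_eq_multiset_sum, Finset.sum_eq_multiset_sum]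
  calc (Finset.univ.val.map fun i => g (hA.eigenvalues i)).sum
      = ((Finset.univ.val.map hA.eigenvalues).map g).sum := by rw [Multiset.map_map]; rfl
    _ = ((Finset.univ.val.map f).map g).sum := by rw [h3]
    _ = (Finset.univ.val.map fun j => g (f j)).sum := by rw [Multiset.map_map]; rfl
open Polynomial in
lemma my_vnEntropy_eq {n m : Type*} [Fintype n] [DecidableEq n] [Fintype m]
    {A : Matrix n n ℂ} (hA : A.IsHermitian) (f : m → ℝ)
    (h : A.charpoly = ∏ j, (X - C ((f j : ℝ) : ℂ))) :
    vnEntropy A = -∑ j, f j * Real.logb 2 (f j) := by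
  rw [vnEntropy, dif_pos hA, my_sum_eig hA f h (fun x => x * Real.logb 2 x)]

lemma my_vnEntropy_submatrix {n m : Type*} [Fintype n] [DecidableEq n] [Fintype m] [DecidableEq m]
    {A : Matrix n n ℂ} (hA : A.IsHermitian) (e : m ≃ n) :
    vnEntropy (A.submatrix e e) = vnEntropy A := by
  rw [my_vnEntropy_eq (hA.submatrix e) hA.eigenvalues ?_,
      my_vnEntropy_eq hA hA.eigenvalues (my_herm_charpoly hA)]
  have : A.submatrix e e = Matrix.reindex e.symm e.symm A := by
    ext i j; simp [Matrix.reindex_apply]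
  rw [this, Matrix.charpoly_reindex, my_herm_charpoly hA]
lemma my_trace_eq_sum_eig {n : Type*} [Fintype n] [DecidableEq n]
    {A : Matrix n n ℂ} (hA : A.IsHermitian) :
    A.trace = ((∑ i, hA.eigenvalues i : ℝ) : ℂ) := by
  rw [Matrix.trace_eq_sum_roots_charpoly, my_herm_charpoly hA, my_roots_prod]
  rw [← Finset.sum_eq_multiset_sum]
  push_cast
  rfl

lemma my_kron_herm {n m : Type*} [Fintype n] [Fintype m]
    {A : Matrix n n ℂ} {B : Matrix m m ℂ} (hA : A.IsHermitian) (hB : B.IsHermitian) :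
    (Matrix.kroneckerMap (· * ·) A B).IsHermitian := by
  ext p q
  simp only [Matrix.conjTranspose_apply, Matrix.kroneckerMap_apply, star_mul']
  rw [← Matrix.conjTranspose_apply A, ← Matrix.conjTranspose_apply B, hA, hB]

lemma my_mul_logb_mul (a b : ℝ) :
    (a * b) * Real.logb 2 (a * b) = b * (a * Real.logb 2 a) + a * (b * Real.logb 2 b) := by
  by_cases ha : a = 0
  · simp [ha]
  by_cases hb : b = 0
  · simp [hb]
  rw [Real.logb, Real.logb, Real.logb, Real.log_mul ha hb]
  ring

open Polynomial in
lemma my_vnEntropy_kron {n m : Type*} [Fintype n] [DecidableEq n] [Fintype m] [DecidableEq m]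
    {A : Matrix n n ℂ} {B : Matrix m m ℂ} (hA : A.IsHermitian) (hB : B.IsHermitian)
    (htA : A.trace = 1) (htB : B.trace = 1) :
    vnEntropy (Matrix.kroneckerMap (· * ·) A B) = vnEntropy A + vnEntropy B := by
  have hU1A : (hA.eigenvectorUnitary : Matrix n n ℂ) * star (hA.eigenvectorUnitary : Matrix n n ℂ) = 1 :=
    Matrix.mem_unitaryGroup_iff.mp (hA.eigenvectorUnitary).2
  have hU2A : star (hA.eigenvectorUnitary : Matrix n n ℂ) * (hA.eigenvectorUnitary : Matrix n n ℂ) = 1 :=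
    Matrix.mem_unitaryGroup_iff'.mp (hA.eigenvectorUnitary).2
  have hU1B : (hB.eigenvectorUnitary : Matrix m m ℂ) * star (hB.eigenvectorUnitary : Matrix m m ℂ) = 1 :=
    Matrix.mem_unitaryGroup_iff.mp (hB.eigenvectorUnitary).2
  have hU2B : star (hB.eigenvectorUnitary : Matrix m m ℂ) * (hB.eigenvectorUnitary : Matrix m m ℂ) = 1 :=
    Matrix.mem_unitaryGroup_iff'.mp (hB.eigenvectorUnitary).2
  set U : Matrix n n ℂ := (hA.eigenvectorUnitary : Matrix n n ℂ)
  set V : Matrix m m ℂ := (hB.eigenvectorUnitary : Matrix m m ℂ)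
  set W : Matrix (n × m) (n × m) ℂ := Matrix.kroneckerMap (· * ·) U V with hW
  have hstarW : star W = Matrix.kroneckerMap (· * ·) (star U) (star V) := by
    ext p q
    simp [hW, Matrix.star_apply, Matrix.kroneckerMap_apply, star_mul', mul_comm]
  have hW1 : W * star W = 1 := by
    rw [hstarW, hW, ← Matrix.mul_kronecker_mul, hU1A, hU1B, Matrix.one_kronecker_one]
  have hW2 : star W * W = 1 := by
    rw [hstarW, hW, ← Matrix.mul_kronecker_mul, hU2A, hU2B, Matrix.one_kronecker_one]
  have hKron : Matrix.kroneckerMap (· * ·) A B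
      = W * Matrix.kroneckerMap (· * ·)
          (Matrix.diagonal (RCLike.ofReal ∘ hA.eigenvalues))
          (Matrix.diagonal (RCLike.ofReal ∘ hB.eigenvalues)) * star W := by
    conv_lhs => rw [hA.spectral_theorem, hB.spectral_theorem, Unitary.conjStarAlgAut_apply,
      Unitary.conjStarAlgAut_apply]
    rw [hstarW, hW, ← Matrix.mul_kronecker_mul, ← Matrix.mul_kronecker_mul]
  have hcp : (Matrix.kroneckerMap (· * ·) A B).charpoly
      = ∏ p : n × m, (X - C (((hA.eigenvalues p.1 * hB.eigenvalues p.2 : ℝ)) : ℂ)) := by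
    rw [hKron, my_charpoly_conj _ _ hW1 hW2, Matrix.diagonal_kronecker_diagonal,
      my_charpoly_diagonal]
    apply Finset.prod_congr rfl
    intro p _
    push_cast
    rfl
  rw [my_vnEntropy_eq (my_kron_herm hA hB) _ hcp,
    my_vnEntropy_eq hA hA.eigenvalues (my_herm_charpoly hA),
    my_vnEntropy_eq hB hB.eigenvalues (my_herm_charpoly hB)]
  have hsA : ∑ i, hA.eigenvalues i = 1 := by
    have := my_trace_eq_sum_eig hA
    rw [htA] at this
    exact_mod_cast this.symm
  have hsB : ∑ j, hB.eigenvalues j = 1 := by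
    have := my_trace_eq_sum_eig hB
    rw [htB] at this
    exact_mod_cast this.symm
  rw [Fintype.sum_prod_type]
  have : ∀ i, ∑ j, (hA.eigenvalues i * hB.eigenvalues j) *
      Real.logb 2 (hA.eigenvalues i * hB.eigenvalues j)
      = (hA.eigenvalues i * Real.logb 2 (hA.eigenvalues i))
        + hA.eigenvalues i * ∑ j, hB.eigenvalues j * Real.logb 2 (hB.eigenvalues j) := by
    intro i
    rw [Finset.sum_congr rfl (fun j _ => my_mul_logb_mul (hA.eigenvalues i) (hB.eigenvalues j)),
      Finset.sum_add_distrib, ← Finset.sum_mul, ← Finset.mul_sum, hsB, one_mul]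
  rw [Finset.sum_congr rfl (fun i _ => this i), Finset.sum_add_distrib, ← Finset.sum_mul, hsA]
  ring
lemma my_outer_psd {I : Type*} [Fintype I] [DecidableEq I] (v : I → ℂ) :
    (Matrix.of fun a b => v a * (starRingEnd ℂ) (v b)).PosSemidef := by
  refine Matrix.PosSemidef.of_dotProduct_mulVec_nonneg ?_ ?_
  · ext a b
    simp only [Matrix.conjTranspose_apply, Matrix.of_apply, star_mul', starRingEnd_apply,
      star_star]
    ring
  · intro x
    have hz : dotProduct (star x)
          ((Matrix.of fun a b => v a * (starRingEnd ℂ) (v b)) *ᵥ x)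
        = star (∑ b, (starRingEnd ℂ) (v b) * x b) * (∑ b, (starRingEnd ℂ) (v b) * x b) := by
      simp only [dotProduct, Matrix.mulVec, Matrix.of_apply, Pi.star_apply,
        star_sum, star_mul', starRingEnd_apply, star_star, Finset.sum_mul, Finset.mul_sum]
      rw [Finset.sum_comm]
      apply Finset.sum_congr rfl
      intro a _
      apply Finset.sum_congr rfl
      intro b _
      ring
    rw [hz]
    have := Complex.normSq_eq_conj_mul_self (z := ∑ b, (starRingEnd ℂ) (v b) * x b)
    rw [show star (∑ b, (starRingEnd ℂ) (v b) * x b)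
        = (starRingEnd ℂ) (∑ b, (starRingEnd ℂ) (v b) * x b) from rfl, ← this]
    exact Complex.zero_le_real.mpr (Complex.normSq_nonneg _)

lemma my_Y_eq_zero {n m : Type*} [Fintype n] [Fintype m] [DecidableEq m]
    (Y : Matrix n m ℂ) (h : (Yᴴ * Y).trace = 0) : Y = 0 := by
  have key : ∑ j, ∑ i, Complex.normSq (Y i j) = 0 := by
    have h1 : (Yᴴ * Y).trace = ((∑ j, ∑ i, Complex.normSq (Y i j) : ℝ) : ℂ) := by
      simp only [Matrix.trace, Matrix.diag, Matrix.mul_apply, Matrix.conjTranspose_apply]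
      push_cast
      apply Finset.sum_congr rfl
      intro j _
      apply Finset.sum_congr rfl
      intro i _
      rw [Complex.normSq_eq_conj_mul_self]
      rfl
    rw [h] at h1
    exact_mod_cast h1.symm
  ext i j
  have hterm : ∀ j ∈ Finset.univ, (0:ℝ) ≤ ∑ i, Complex.normSq (Y i j) :=
    fun j _ => Finset.sum_nonneg fun i _ => Complex.normSq_nonneg _
  have h2 := (Finset.sum_eq_zero_iff_of_nonneg hterm).mp key j (Finset.mem_univ j)
  have h3 := (Finset.sum_eq_zero_iff_of_nonneg
    (fun i _ => Complex.normSq_nonneg (Y i j))).mp h2 i (Finset.mem_univ i)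
  simpa using Complex.normSq_eq_zero.mp h3
lemma my_outer_idem {I : Type*} [Fintype I] [DecidableEq I]
    (v : I → ℂ) (hv : ∑ a, v a * (starRingEnd ℂ) (v a) = 1) :
    (Matrix.of fun a b => v a * (starRingEnd ℂ) (v b)) *
      (Matrix.of fun a b => v a * (starRingEnd ℂ) (v b))
    = (Matrix.of fun a b => v a * (starRingEnd ℂ) (v b)) := by
  ext a b
  simp only [Matrix.mul_apply, Matrix.of_apply]
  calc ∑ q, (v a * (starRingEnd ℂ) (v q)) * (v q * (starRingEnd ℂ) (v b))
      = ∑ q, (v q * (starRingEnd ℂ) (v q)) * (v a * (starRingEnd ℂ) (v b)) :=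
        Finset.sum_congr rfl fun q _ => by ring
    _ = v a * (starRingEnd ℂ) (v b) := by rw [← Finset.sum_mul, hv, one_mul]

lemma my_pure_ext_factor {I E : Type*} [Fintype I] [DecidableEq I] [Fintype E] [DecidableEq E]
    (v : I → ℂ) (hv : ∑ a, v a * (starRingEnd ℂ) (v a) = 1)
    (σ : Matrix (I × E) (I × E) ℂ) (hσ : σ.PosSemidef) (htr : σ.trace = 1)
    (hmarg : ∀ p q, ∑ e, σ (p, e) (q, e) = v p * (starRingEnd ℂ) (v q)) :
    ∃ τ : Matrix E E ℂ, τ.IsHermitian ∧ τ.trace = 1 ∧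
      ∀ p e q f, σ (p, e) (q, f) = v p * (starRingEnd ℂ) (v q) * τ e f := by
  classical
  set A : Matrix I I ℂ := Matrix.of (fun a b => v a * (starRingEnd ℂ) (v b)) with hAdef
  set P : Matrix (I × E) (I × E) ℂ := Matrix.kroneckerMap (· * ·) A (1 : Matrix E E ℂ)
    with hPdef
  have hAH : A.IsHermitian := (my_outer_psd v).1
  have hPHe : Pᴴ = P := my_kron_herm hAH (Matrix.isHermitian_one)
  have hPP : P * P = P := by
    rw [hPdef, ← Matrix.mul_kronecker_mul, Matrix.one_mul, hAdef, my_outer_idem v hv]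
  have hPapp : ∀ (p : I) (e : E) (q : I) (f : E), P (p, e) (q, f)
      = v p * (starRingEnd ℂ) (v q) * (if e = f then 1 else 0) := by
    intro p e q f
    simp [hPdef, Matrix.kroneckerMap_apply, hAdef, Matrix.one_apply]
  have htrP : (σ * P).trace = 1 := by
    have expand : (σ * P).trace
        = ∑ p : I, ∑ e : E, ∑ q : I, σ (p, e) (q, e) * (v q * (starRingEnd ℂ) (v p)) := by
      rw [Matrix.trace]
      simp only [Matrix.diag, Matrix.mul_apply]
      rw [Fintype.sum_prod_type]
      apply Finset.sum_congr rfl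
      intro p _
      apply Finset.sum_congr rfl
      intro e _
      rw [Fintype.sum_prod_type]
      apply Finset.sum_congr rfl
      intro q _
      calc ∑ f, σ (p, e) (q, f) * P (q, f) (p, e)
          = ∑ f, (if f = e then σ (p, e) (q, f) * (v q * (starRingEnd ℂ) (v p)) else 0) := by
            apply Finset.sum_congr rfl
            intro f _
            rw [hPapp]
            by_cases h : f = e
            · simp only [if_pos h, if_pos (h : f = e)]; ring
            · simp [if_neg h, fun hh => h hh]
        _ = σ (p, e) (q, e) * (v q * (starRingEnd ℂ) (v p)) := by
            rw [Finset.sum_ite_eq' Finset.univ e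
              fun f => σ (p, e) (q, f) * (v q * (starRingEnd ℂ) (v p))]
            simp
    rw [expand]
    calc ∑ p : I, ∑ e : E, ∑ q : I, σ (p, e) (q, e) * (v q * (starRingEnd ℂ) (v p))
        = ∑ p : I, ∑ q : I, (∑ e : E, σ (p, e) (q, e)) * (v q * (starRingEnd ℂ) (v p)) := by
          apply Finset.sum_congr rfl
          intro p _
          rw [Finset.sum_comm]
          exact Finset.sum_congr rfl fun q _ => (Finset.sum_mul _ _ _).symm
      _ = ∑ p : I, ∑ q : I,
            (v p * (starRingEnd ℂ) (v p)) * (v q * (starRingEnd ℂ) (v q)) := by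
          apply Finset.sum_congr rfl
          intro p _
          apply Finset.sum_congr rfl
          intro q _
          rw [hmarg]
          ring
      _ = 1 := by rw [← Finset.sum_mul_sum, hv, one_mul]
  obtain ⟨X, hX⟩ : ∃ X : Matrix (I × E) (I × E) ℂ, σ = Xᴴ * X := by
    open scoped MatrixOrder Matrix.Norms.L2Operator in
    obtain ⟨X, hX⟩ := CStarAlgebra.nonneg_iff_eq_star_mul_self.mp hσ.nonneg
    exact ⟨X, hX⟩
  have hone : ((1 : Matrix (I × E) (I × E) ℂ) - P) * (1 - P) = 1 - P := by
    rw [Matrix.sub_mul, Matrix.one_mul, Matrix.mul_sub, Matrix.mul_one, hPP]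
    abel
  have hXQ : X * (1 - P) = 0 := by
    apply my_Y_eq_zero
    have h1 : (X * (1 - P))ᴴ * (X * (1 - P)) = (1 - P) * σ * (1 - P) := by
      rw [Matrix.conjTranspose_mul]
      have h2 : (1 - P)ᴴ = 1 - P := by
        rw [Matrix.conjTranspose_sub, Matrix.conjTranspose_one, hPHe]
      rw [h2, hX]
      rw [Matrix.mul_assoc, Matrix.mul_assoc, Matrix.mul_assoc]
    rw [h1, Matrix.trace_mul_comm, ← Matrix.mul_assoc, hone, Matrix.trace_mul_comm,
      Matrix.mul_sub, Matrix.mul_one, Matrix.trace_sub, htr, htrP, sub_self]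
  have hXP : X = X * P := by
    have := hXQ
    rw [Matrix.mul_sub, Matrix.mul_one, sub_eq_zero] at this
    exact this
  have hfac : σ = P * σ * P := by
    calc σ = Xᴴ * X := hX
      _ = (X * P)ᴴ * (X * P) := by rw [← hXP]
      _ = P * (Xᴴ * X) * P := by
          rw [Matrix.conjTranspose_mul, hPHe, Matrix.mul_assoc, Matrix.mul_assoc,
            Matrix.mul_assoc]
      _ = P * σ * P := by rw [← hX]
  set τ : Matrix E E ℂ :=
    Matrix.of (fun e f => ∑ p, ∑ q, (starRingEnd ℂ) (v p) * σ (p, e) (q, f) * v q) with hτdef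
  have hPσ : ∀ (p : I) (e : E) (q' : I) (f : E),
      (P * σ) (p, e) (q', f) = ∑ p' : I, (v p * (starRingEnd ℂ) (v p')) * σ (p', e) (q', f) := by
    intro p e q' f
    rw [Matrix.mul_apply, Fintype.sum_prod_type]
    apply Finset.sum_congr rfl
    intro p' _
    calc ∑ e' : E, P (p, e) (p', e') * σ (p', e') (q', f)
        = ∑ e' : E, (if e = e' then (v p * (starRingEnd ℂ) (v p')) * σ (p', e') (q', f) else 0) := by
          apply Finset.sum_congr rfl
          intro e' _
          rw [hPapp]
          by_cases h : e = e'
          · simp only [if_pos h]; ring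
          · simp [if_neg h]
      _ = (v p * (starRingEnd ℂ) (v p')) * σ (p', e) (q', f) := by
          rw [Finset.sum_ite_eq Finset.univ e
            fun e' => (v p * (starRingEnd ℂ) (v p')) * σ (p', e') (q', f)]
          simp
  have hfact : ∀ (p : I) (e : E) (q : I) (f : E),
      σ (p, e) (q, f) = v p * (starRingEnd ℂ) (v q) * τ e f := by
    intro p e q f
    conv_lhs => rw [hfac]
    rw [Matrix.mul_apply, Fintype.sum_prod_type]
    calc ∑ q' : I, ∑ f' : E, (P * σ) (p, e) (q', f') * P (q', f') (q, f)
        = ∑ q' : I, (P * σ) (p, e) (q', f) * (v q' * (starRingEnd ℂ) (v q)) := by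
          apply Finset.sum_congr rfl
          intro q' _
          calc ∑ f' : E, (P * σ) (p, e) (q', f') * P (q', f') (q, f)
              = ∑ f' : E, (if f' = f then
                  (P * σ) (p, e) (q', f') * (v q' * (starRingEnd ℂ) (v q)) else 0) := by
                apply Finset.sum_congr rfl
                intro f' _
                rw [hPapp]
                by_cases h : f' = f
                · simp only [if_pos h]; ring
                · simp [if_neg h]
            _ = (P * σ) (p, e) (q', f) * (v q' * (starRingEnd ℂ) (v q)) := by
                rw [Finset.sum_ite_eq' Finset.univ f
                  fun f' => (P * σ) (p, e) (q', f') * (v q' * (starRingEnd ℂ) (v q))]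
                simp
      _ = ∑ q' : I, ∑ p' : I,
            ((v p * (starRingEnd ℂ) (v p')) * σ (p', e) (q', f)) * (v q' * (starRingEnd ℂ) (v q)) := by
          apply Finset.sum_congr rfl
          intro q' _
          rw [hPσ, Finset.sum_mul]
      _ = v p * (starRingEnd ℂ) (v q) * τ e f := by
          rw [hτdef]
          simp only [Matrix.of_apply]
          rw [Finset.mul_sum]
          rw [Finset.sum_comm]
          apply Finset.sum_congr rfl
          intro p' _
          rw [Finset.mul_sum]
          apply Finset.sum_congr rfl
          intro q' _
          ring
  have hτtr : τ.trace = 1 := by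
    rw [Matrix.trace]
    simp only [Matrix.diag, hτdef, Matrix.of_apply]
    calc ∑ e : E, ∑ p : I, ∑ q : I, (starRingEnd ℂ) (v p) * σ (p, e) (q, e) * v q
        = ∑ p : I, ∑ q : I, (starRingEnd ℂ) (v p) * (∑ e : E, σ (p, e) (q, e)) * v q := by
          rw [Finset.sum_comm]
          apply Finset.sum_congr rfl
          intro p _
          rw [Finset.sum_comm]
          apply Finset.sum_congr rfl
          intro q _
          rw [Finset.mul_sum, Finset.sum_mul]
      _ = ∑ p : I, ∑ q : I,
            (v p * (starRingEnd ℂ) (v p)) * (v q * (starRingEnd ℂ) (v q)) := by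
          apply Finset.sum_congr rfl
          intro p _
          apply Finset.sum_congr rfl
          intro q _
          rw [hmarg]
          ring
      _ = 1 := by rw [← Finset.sum_mul_sum, hv, one_mul]
  have hτH : τ.IsHermitian := by
    have hσap : ∀ r s, star (σ r s) = σ s r := by
      intro r s
      have := congrFun (congrFun hσ.1 s) r
      rw [Matrix.conjTranspose_apply] at this
      exact this
    ext e f
    rw [Matrix.conjTranspose_apply, hτdef]
    simp only [Matrix.of_apply]
    rw [star_sum]
    rw [Finset.sum_comm]
    apply Finset.sum_congr rfl
    intro p _
    rw [star_sum]
    apply Finset.sum_congr rfl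
    intro q _
    rw [star_mul', star_mul', starRingEnd_apply, starRingEnd_apply, star_star, hσap]
    ring
  exact ⟨τ, hτH, hτtr, hfact⟩

lemma my_gram_herm {n s : Type*} [Fintype s] (g : n → s → ℂ) :
    (Matrix.of fun p q => ∑ t, g p t * (starRingEnd ℂ) (g q t)).IsHermitian := by
  ext p q
  simp only [Matrix.conjTranspose_apply, Matrix.of_apply, star_sum, star_mul',
    starRingEnd_apply, star_star]
  exact Finset.sum_congr rfl fun t _ => by ring

section ExtQcmi

variable {dA dB dC dD dE : Type*}
    [Fintype dA] [Fintype dB] [Fintype dC] [Fintype dD] [Fintype dE]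
    [DecidableEq dA] [DecidableEq dB] [DecidableEq dC] [DecidableEq dD] [DecidableEq dE]

set_option maxHeartbeats 2000000 in
lemma my_ext_qcmi (v : (dA × dB × dC × dD) → ℂ)
    (hv : ∑ a, v a * (starRingEnd ℂ) (v a) = 1)
    (σ : Matrix ((dA × dB × dC × dD) × dE) ((dA × dB × dC × dD) × dE) ℂ)
    (hσ : σ.PosSemidef) (htr : σ.trace = 1)
    (hmarg : ∀ p q, ∑ e, σ (p, e) (q, e) = v p * (starRingEnd ℂ) (v q)) :
    qcmi (Matrix.of fun (p q : dA × (dB × dE) × dC) =>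
      ∑ d : dD, σ ((p.1, p.2.1.1, p.2.2, d), p.2.1.2) ((q.1, q.2.1.1, q.2.2, d), q.2.1.2))
    = qcmi (pureMargABC v) := by
  classical
  obtain ⟨τ, hτH, hτtr, hfact⟩ := my_pure_ext_factor v hv σ hσ htr hmarg
  set M : Matrix (dA × dB × dC) (dA × dB × dC) ℂ := pureMargABC v with hM
  set MAB : Matrix (dA × dB) (dA × dB) ℂ :=
    Matrix.of (fun p q => ∑ c, M (p.1, p.2, c) (q.1, q.2, c)) with hMAB
  set MBC : Matrix (dB × dC) (dB × dC) ℂ :=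
    Matrix.of (fun p q => ∑ a, M (a, p.1, p.2) (a, q.1, q.2)) with hMBC
  set MB : Matrix dB dB ℂ :=
    Matrix.of (fun b b' => ∑ a, ∑ c, M (a, b, c) (a, b', c)) with hMB
  -- hermitian facts
  have hMH : M.IsHermitian := by
    have := my_gram_herm (fun (p : dA × dB × dC) (d : dD) => v (p.1, p.2.1, p.2.2, d))
    have heq : M = Matrix.of fun p q => ∑ d : dD,
        v (p.1, p.2.1, p.2.2, d) * (starRingEnd ℂ) (v (q.1, q.2.1, q.2.2, d)) := rfl
    rw [heq]; exact this
  have hMABH : MAB.IsHermitian := by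
    have := my_gram_herm (fun (p : dA × dB) (t : dC × dD) => v (p.1, p.2, t.1, t.2))
    have heq : MAB = Matrix.of fun p q => ∑ t : dC × dD,
        v (p.1, p.2, t.1, t.2) * (starRingEnd ℂ) (v (q.1, q.2, t.1, t.2)) := by
      ext p q
      simp only [hMAB, Matrix.of_apply, hM, pureMargABC, Fintype.sum_prod_type]
    rw [heq]; exact this
  have hMBCH : MBC.IsHermitian := by
    have := my_gram_herm (fun (p : dB × dC) (t : dA × dD) => v (t.1, p.1, p.2, t.2))
    have heq : MBC = Matrix.of fun p q => ∑ t : dA × dD,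
        v (t.1, p.1, p.2, t.2) * (starRingEnd ℂ) (v (t.1, q.1, q.2, t.2)) := by
      ext p q
      simp only [hMBC, Matrix.of_apply, hM, pureMargABC, Fintype.sum_prod_type]
    rw [heq]; exact this
  have hMBH : MB.IsHermitian := by
    have := my_gram_herm (fun (b : dB) (t : dA × dC × dD) => v (t.1, b, t.2.1, t.2.2))
    have heq : MB = Matrix.of fun b b' => ∑ t : dA × dC × dD,
        v (t.1, b, t.2.1, t.2.2) * (starRingEnd ℂ) (v (t.1, b', t.2.1, t.2.2)) := by
      ext b b'
      simp only [hMB, Matrix.of_apply, hM, pureMargABC, Fintype.sum_prod_type]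
    rw [heq]; exact this
  -- trace facts
  have hv4 : ∑ a, ∑ b, ∑ c, ∑ d, v (a, b, c, d) * (starRingEnd ℂ) (v (a, b, c, d)) = 1 := by
    rw [← hv]
    rw [Fintype.sum_prod_type]
    apply Finset.sum_congr rfl
    intro a _
    rw [Fintype.sum_prod_type]
    apply Finset.sum_congr rfl
    intro b _
    rw [Fintype.sum_prod_type]
  have hMtr : M.trace = 1 := by
    rw [Matrix.trace, ← hv4]
    simp only [Matrix.diag, hM, pureMargABC, Matrix.of_apply]
    rw [Fintype.sum_prod_type]
    apply Finset.sum_congr rfl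
    intro a _
    rw [Fintype.sum_prod_type]
  have hMABtr : MAB.trace = 1 := by
    rw [Matrix.trace, ← hv4]
    simp only [Matrix.diag, hMAB, Matrix.of_apply, hM, pureMargABC]
    rw [Fintype.sum_prod_type]
  have hMBtr : MB.trace = 1 := by
    rw [Matrix.trace, ← hv4]
    simp only [Matrix.diag, hMB, Matrix.of_apply, hM, pureMargABC]
    rw [Finset.sum_comm]
  have hMBCtr : MBC.trace = 1 := by
    rw [Matrix.trace, ← hv4]
    simp only [Matrix.diag, hMBC, Matrix.of_apply, hM, pureMargABC]
    rw [Fintype.sum_prod_type]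
    calc ∑ b, ∑ c, ∑ a, ∑ d, v (a, b, c, d) * (starRingEnd ℂ) (v (a, b, c, d))
        = ∑ b, ∑ a, ∑ c, ∑ d, v (a, b, c, d) * (starRingEnd ℂ) (v (a, b, c, d)) :=
          Finset.sum_congr rfl fun b _ => Finset.sum_comm
      _ = ∑ a, ∑ b, ∑ c, ∑ d, v (a, b, c, d) * (starRingEnd ℂ) (v (a, b, c, d)) :=
          Finset.sum_comm
  -- the extended matrix and its marginals
  set F : Matrix (dA × (dB × dE) × dC) (dA × (dB × dE) × dC) ℂ :=
    Matrix.of (fun p q =>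
      ∑ d : dD, σ ((p.1, p.2.1.1, p.2.2, d), p.2.1.2) ((q.1, q.2.1.1, q.2.2, d), q.2.1.2))
    with hF
  have hFapp : ∀ p q : dA × (dB × dE) × dC,
      F p q = M (p.1, p.2.1.1, p.2.2) (q.1, q.2.1.1, q.2.2) * τ p.2.1.2 q.2.1.2 := by
    intro p q
    simp only [hF, Matrix.of_apply, hM, pureMargABC]
    rw [Finset.sum_congr rfl fun d _ => hfact (p.1, p.2.1.1, p.2.2, d) p.2.1.2
      (q.1, q.2.1.1, q.2.2, d) q.2.1.2]
    rw [← Finset.sum_mul]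
  -- equivalences
  let e0 : dA × (dB × dE) × dC ≃ (dA × dB × dC) × dE :=
    ⟨fun x => ((x.1, x.2.1.1, x.2.2), x.2.1.2),
     fun y => (y.1.1, (y.1.2.1, y.2), y.1.2.2), fun _ => rfl, fun _ => rfl⟩
  let e1 : dA × (dB × dE) ≃ (dA × dB) × dE :=
    ⟨fun x => ((x.1, x.2.1), x.2.2), fun y => (y.1.1, (y.1.2, y.2)), fun _ => rfl, fun _ => rfl⟩
  let e2 : (dB × dE) × dC ≃ (dB × dC) × dE :=
    ⟨fun x => ((x.1.1, x.2), x.1.2), fun y => ((y.1.1, y.2), y.1.2), fun _ => rfl, fun _ => rfl⟩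
  -- identification of the four matrices
  have hFeq : F = (Matrix.kroneckerMap (· * ·) M τ).submatrix e0 e0 := by
    ext p q
    rw [hFapp p q]
    rfl
  have hG1 : (Matrix.of fun (p q : dA × (dB × dE)) =>
        ∑ c, F (p.1, p.2, c) (q.1, q.2, c))
      = (Matrix.kroneckerMap (· * ·) MAB τ).submatrix e1 e1 := by
    ext p q
    simp only [Matrix.of_apply]
    rw [Finset.sum_congr rfl fun c _ => hFapp (p.1, p.2, c) (q.1, q.2, c)]
    dsimp only
    rw [← Finset.sum_mul]
    rfl
  have hG2 : (Matrix.of fun (p q : (dB × dE) × dC) =>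
        ∑ a, F (a, p.1, p.2) (a, q.1, q.2))
      = (Matrix.kroneckerMap (· * ·) MBC τ).submatrix e2 e2 := by
    ext p q
    simp only [Matrix.of_apply]
    rw [Finset.sum_congr rfl fun a _ => hFapp (a, p.1, p.2) (a, q.1, q.2)]
    dsimp only
    rw [← Finset.sum_mul]
    rfl
  have hG3 : (Matrix.of fun (y y' : dB × dE) =>
        ∑ a, ∑ c, F (a, y, c) (a, y', c))
      = Matrix.kroneckerMap (· * ·) MB τ := by
    ext y y'
    simp only [Matrix.of_apply]
    rw [Finset.sum_congr rfl fun a _ => Finset.sum_congr rfl fun c _ => hFapp (a, y, c) (a, y', c)]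
    dsimp only
    rw [Finset.sum_congr rfl fun a _ => (Finset.sum_mul _ _ _).symm, ← Finset.sum_mul]
    rfl
  -- put it together
  rw [qcmi, qcmi]
  rw [hG1, hG2, hG3, hFeq]
  rw [my_vnEntropy_submatrix (my_kron_herm hMABH hτH) e1,
    my_vnEntropy_submatrix (my_kron_herm hMBCH hτH) e2,
    my_vnEntropy_submatrix (my_kron_herm hMH hτH) e0,
    my_vnEntropy_kron hMABH hτH hMABtr hτtr,
    my_vnEntropy_kron hMBCH hτH hMBCtr hτtr,
    my_vnEntropy_kron hMBH hτH hMBtr hτtr,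
    my_vnEntropy_kron hMH hτH hMtr hτtr]
  ring

end ExtQcmi

lemma my_roof_rigid {I : Type*} [Fintype I] [DecidableEq I]
    (v : I → ℂ) (hv : ∑ a, v a * (starRingEnd ℂ) (v a) = 1)
    {k : ℕ} (p : Fin k → ℝ) (w : Fin k → I → ℂ) (hp : ∀ i, 0 ≤ p i)
    (hdec : ∀ a b, v a * (starRingEnd ℂ) (v b)
      = ∑ j, (p j : ℂ) * (w j a * (starRingEnd ℂ) (w j b)))
    (i : Fin k) (hpi : p i ≠ 0) :
    ∃ c : ℂ, ∀ a, w i a = c * v a := by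
  classical
  set c : ℂ := ∑ a, (starRingEnd ℂ) (v a) * w i a with hc
  set u : I → ℂ := fun a => w i a - c * v a with hu
  have hvv : ∑ a, (starRingEnd ℂ) (v a) * v a = 1 := by
    rw [← hv]; exact Finset.sum_congr rfl fun a _ => by ring
  have hvu : ∑ a, (starRingEnd ℂ) (v a) * u a = 0 := by
    have hsplit : ∀ a, (starRingEnd ℂ) (v a) * u a
        = (starRingEnd ℂ) (v a) * w i a - c * ((starRingEnd ℂ) (v a) * v a) := by
      intro a; rw [hu]; ring
    rw [Finset.sum_congr rfl fun a _ => hsplit a, Finset.sum_sub_distrib, ← hc,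
      ← Finset.mul_sum, hvv, mul_one, sub_self]
  have huv : ∑ a, (starRingEnd ℂ) (u a) * v a = 0 := by
    have hterm : ∀ a : I, (starRingEnd ℂ) (u a) * v a
        = (starRingEnd ℂ) ((starRingEnd ℂ) (v a) * u a) := by
      intro a
      rw [map_mul, Complex.conj_conj]
      ring
    rw [Finset.sum_congr rfl fun a _ => hterm a, ← map_sum, hvu, map_zero]
  set z : Fin k → ℂ := fun j => ∑ a, (starRingEnd ℂ) (u a) * w j a with hz
  have hzbar : ∀ j, ∑ b, (starRingEnd ℂ) (w j b) * u b = (starRingEnd ℂ) (z j) := by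
    intro j
    rw [hz, map_sum]
    apply Finset.sum_congr rfl
    intro b _
    rw [map_mul, Complex.conj_conj]
    ring
  have hQ : ∑ j, (p j : ℂ) * (z j * (starRingEnd ℂ) (z j)) = 0 := by
    have lhs1 : ∑ a, ∑ b, (starRingEnd ℂ) (u a) * (v a * (starRingEnd ℂ) (v b)) * u b = 0 := by
      have hterm : ∀ a : I, ∑ b, (starRingEnd ℂ) (u a) * (v a * (starRingEnd ℂ) (v b)) * u b
          = ((starRingEnd ℂ) (u a) * v a) * ∑ b, (starRingEnd ℂ) (v b) * u b := by
        intro a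
        rw [Finset.mul_sum]
        exact Finset.sum_congr rfl fun b _ => by ring
      rw [Finset.sum_congr rfl fun a _ => hterm a, hvu]
      simp
    have lhs2 : ∑ a, ∑ b, (starRingEnd ℂ) (u a) * (v a * (starRingEnd ℂ) (v b)) * u b
        = ∑ j, (p j : ℂ) * (z j * (starRingEnd ℂ) (z j)) := by
      have hterm : ∀ a b, (starRingEnd ℂ) (u a) * (v a * (starRingEnd ℂ) (v b)) * u b
          = ∑ j, (p j : ℂ) * (((starRingEnd ℂ) (u a) * w j a) * ((starRingEnd ℂ) (w j b) * u b)) := by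
        intro a b
        calc (starRingEnd ℂ) (u a) * (v a * (starRingEnd ℂ) (v b)) * u b
            = (starRingEnd ℂ) (u a) * (∑ j, (p j : ℂ) * (w j a * (starRingEnd ℂ) (w j b))) * u b := by
              rw [← hdec a b]
          _ = ∑ j, (p j : ℂ) * (((starRingEnd ℂ) (u a) * w j a) * ((starRingEnd ℂ) (w j b) * u b)) := by
              rw [Finset.mul_sum, Finset.sum_mul]
              exact Finset.sum_congr rfl fun j _ => by ring
      calc ∑ a, ∑ b, (starRingEnd ℂ) (u a) * (v a * (starRingEnd ℂ) (v b)) * u b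
          = ∑ a, ∑ b, ∑ j, (p j : ℂ)
              * (((starRingEnd ℂ) (u a) * w j a) * ((starRingEnd ℂ) (w j b) * u b)) := by
            exact Finset.sum_congr rfl fun a _ => Finset.sum_congr rfl fun b _ => hterm a b
        _ = ∑ j, ∑ a, ∑ b, (p j : ℂ)
              * (((starRingEnd ℂ) (u a) * w j a) * ((starRingEnd ℂ) (w j b) * u b)) := by
            exact (Finset.sum_congr rfl fun a (_ : a ∈ Finset.univ) =>
              Finset.sum_comm).trans Finset.sum_comm
        _ = ∑ j, (p j : ℂ) * (z j * (starRingEnd ℂ) (z j)) := by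
            apply Finset.sum_congr rfl
            intro j _
            rw [← hzbar j]
            simp only [hz]
            rw [Finset.sum_mul_sum, Finset.mul_sum]
            apply Finset.sum_congr rfl
            intro a _
            rw [Finset.mul_sum]
    rw [← lhs2, lhs1]
  have hR : ∑ j, p j * Complex.normSq (z j) = 0 := by
    have hcast : ∑ j, (p j : ℂ) * (z j * (starRingEnd ℂ) (z j))
        = ((∑ j, p j * Complex.normSq (z j) : ℝ) : ℂ) := by
      push_cast
      apply Finset.sum_congr rfl
      intro j _
      rw [Complex.mul_conj]
    rw [hQ] at hcast
    exact_mod_cast hcast.symm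
  have hzi : z i = 0 := by
    have h0 : ∀ j ∈ Finset.univ, (0:ℝ) ≤ p j * Complex.normSq (z j) :=
      fun j _ => mul_nonneg (hp j) (Complex.normSq_nonneg _)
    have := (Finset.sum_eq_zero_iff_of_nonneg h0).mp hR i (Finset.mem_univ i)
    rcases mul_eq_zero.mp this with h | h
    · exact absurd h hpi
    · exact Complex.normSq_eq_zero.mp h
  have huu : ∀ a, u a = 0 := by
    have hC : ∑ a, (starRingEnd ℂ) (u a) * u a = 0 := by
      have hterm : ∀ a : I, (starRingEnd ℂ) (u a) * u a
          = (starRingEnd ℂ) (u a) * w i a - c * ((starRingEnd ℂ) (u a) * v a) := by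
        intro a
        rw [hu]
        ring
      rw [Finset.sum_congr rfl fun a _ => hterm a, Finset.sum_sub_distrib]
      rw [show ∑ x, (starRingEnd ℂ) (u x) * w i x = z i from rfl, hzi,
        ← Finset.mul_sum, huv, mul_zero, sub_self]
    have hreal : ∑ a, Complex.normSq (u a) = 0 := by
      have hcast : ∑ a, (starRingEnd ℂ) (u a) * u a
          = ((∑ a, Complex.normSq (u a) : ℝ) : ℂ) := by
        push_cast
        apply Finset.sum_congr rfl
        intro a _
        rw [← Complex.normSq_eq_conj_mul_self]
      rw [hC] at hcast
      exact_mod_cast hcast.symm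
    intro a
    have := (Finset.sum_eq_zero_iff_of_nonneg
      (fun a _ => Complex.normSq_nonneg (u a))).mp hreal a (Finset.mem_univ a)
    exact Complex.normSq_eq_zero.mp this
  refine ⟨c, fun a => ?_⟩
  have := huu a
  rw [hu] at this
  have := sub_eq_zero.mp this
  exact this

end MyToolkit

/-- **Saturation for pure states:** for a pure state `ψ = |v⟩⟨v|` on `A⊗B⊗C⊗D`,
`T_sq(A;C|B)_ψ = co(QCMI)[ψ] = (1/2) I(A;C|B)_ψ`. -/
theorem Tsq_pure_saturation {dA dB dC dD : Type*}
    [Fintype dA] [Fintype dB] [Fintype dC] [Fintype dD]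
    [DecidableEq dA] [DecidableEq dB] [DecidableEq dC] [DecidableEq dD]
    (v : (dA × dB × dC × dD) → ℂ)
    (hv : ∑ a, v a * (starRingEnd ℂ) (v a) = 1)
    (ψ : Matrix (dA × dB × dC × dD) (dA × dB × dC × dD) ℂ)
    (hψ : ψ = Matrix.of fun a b => v a * (starRingEnd ℂ) (v b)) :
    Tsq ψ = coQCMI ψ ∧ coQCMI ψ = (1/2) * qcmi (pureMargABC v) := by
  classical
  -- the pure extension with trivial environment
  set σ0 : Matrix ((dA × dB × dC × dD) × Fin 1) ((dA × dB × dC × dD) × Fin 1) ℂ :=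
    Matrix.of (fun r s => v r.1 * (starRingEnd ℂ) (v s.1)) with hσ0
  have hσ0psd : σ0.PosSemidef := my_outer_psd (fun r : (dA × dB × dC × dD) × Fin 1 => v r.1)
  have hσ0tr : σ0.trace = 1 := by
    rw [Matrix.trace]
    simp only [Matrix.diag, hσ0, Matrix.of_apply]
    rw [Fintype.sum_prod_type]
    simpa using hv
  have hσ0marg : ∀ p q, ∑ e : Fin 1, σ0 (p, e) (q, e) = v p * (starRingEnd ℂ) (v q) := by
    intro p q
    simp [hσ0, Matrix.of_apply]
  have hσ0margM : (Matrix.of fun p q => ∑ e, σ0 (p, e) (q, e)) = ψ := by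
    ext p q
    rw [hψ]
    simp only [Matrix.of_apply]
    exact hσ0marg p q
  have hT : Tsq ψ = (1/2) * qcmi (pureMargABC v) := by
    have hsetT : { t : ℝ | ∃ (nE : ℕ)
        (σ : Matrix ((dA × dB × dC × dD) × Fin nE) ((dA × dB × dC × dD) × Fin nE) ℂ),
        IsDensity σ ∧ (Matrix.of fun p q => ∑ e, σ (p, e) (q, e)) = ψ ∧
        t = (1/2) * qcmiACgivenBE σ } = {(1/2) * qcmi (pureMargABC v)} := by
      apply Set.eq_singleton_iff_unique_mem.mpr
      constructor
      · refine ⟨1, σ0, ⟨hσ0psd, hσ0tr⟩, hσ0margM, ?_⟩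
        rw [qcmiACgivenBE, my_ext_qcmi v hv σ0 hσ0psd hσ0tr hσ0marg]
      · rintro t ⟨nE, σ, ⟨hpsd, htrσ⟩, hmargM, ht⟩
        have hm : ∀ p q, ∑ e, σ (p, e) (q, e) = v p * (starRingEnd ℂ) (v q) := by
          intro p q
          have h := congrFun (congrFun hmargM p) q
          rw [hψ] at h
          simpa [Matrix.of_apply] using h
        rw [ht, qcmiACgivenBE, my_ext_qcmi v hv σ hpsd htrσ hm]
    rw [Tsq, hsetT, csInf_singleton]
  have hC : coQCMI ψ = (1/2) * qcmi (pureMargABC v) := by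
    have hsetC : { t : ℝ | ∃ (k : ℕ) (p : Fin k → ℝ) (w : Fin k → (dA × dB × dC × dD) → ℂ),
        (∀ i, 0 ≤ p i) ∧ (∑ i, p i) = 1 ∧
        (∀ i, ∑ a, w i a * (starRingEnd ℂ) (w i a) = 1) ∧
        ψ = ∑ i, (p i : ℂ) • Matrix.of (fun a b => w i a * (starRingEnd ℂ) (w i b)) ∧
        t = (1/2) * ∑ i, p i * qcmi (pureMargABC (w i)) }
        = {(1/2) * qcmi (pureMargABC v)} := by
      apply Set.eq_singleton_iff_unique_mem.mpr
      constructor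
      · refine ⟨1, fun _ => (1:ℝ), fun _ => v, fun _ => zero_le_one, by simp, fun _ => hv, ?_, ?_⟩
        · rw [hψ]
          simp
        · simp
      · rintro t ⟨k, p, w, hp, hps, hnorm, hdecM, ht⟩
        have hdec : ∀ a b, v a * (starRingEnd ℂ) (v b)
            = ∑ j, (p j : ℂ) * (w j a * (starRingEnd ℂ) (w j b)) := by
          intro a b
          have h := congrFun (congrFun (hψ.symm.trans hdecM) a) b
          simpa [Matrix.sum_apply, Matrix.smul_apply, Matrix.of_apply, smul_eq_mul] using h
        have hkey : ∀ j, p j * qcmi (pureMargABC (w j)) = p j * qcmi (pureMargABC v) := by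
          intro j
          by_cases hpj : p j = 0
          · rw [hpj, zero_mul, zero_mul]
          · obtain ⟨c, hcw⟩ := my_roof_rigid v hv p w hp hdec j hpj
            have hcc : c * (starRingEnd ℂ) c = 1 := by
              have h1 : (1:ℂ) = (c * (starRingEnd ℂ) c) * ∑ a, v a * (starRingEnd ℂ) (v a) := by
                rw [← hnorm j, Finset.mul_sum]
                apply Finset.sum_congr rfl
                intro a _
                rw [hcw a, map_mul]
                ring
              rw [hv, mul_one] at h1
              exact h1.symm
            have hMeq : pureMargABC (w j) = pureMargABC v := by
              ext x y
              simp only [pureMargABC, Matrix.of_apply]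
              calc ∑ d, w j (x.1, x.2.1, x.2.2, d) * (starRingEnd ℂ) (w j (y.1, y.2.1, y.2.2, d))
                  = ∑ d, (c * (starRingEnd ℂ) c)
                      * (v (x.1, x.2.1, x.2.2, d) * (starRingEnd ℂ) (v (y.1, y.2.1, y.2.2, d))) := by
                    apply Finset.sum_congr rfl
                    intro d _
                    rw [hcw, hcw, map_mul]
                    ring
                _ = ∑ d, v (x.1, x.2.1, x.2.2, d) * (starRingEnd ℂ) (v (y.1, y.2.1, y.2.2, d)) := by
                    apply Finset.sum_congr rfl
                    intro d _
                    rw [hcc, one_mul]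
            rw [hMeq]
        rw [ht, Finset.sum_congr rfl fun j _ => hkey j, ← Finset.sum_mul, hps, one_mul]
    rw [coQCMI, hsetC, csInf_singleton]
  exact ⟨hT.trans hC.symm, hC⟩
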